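/- Let $S$ be a finite set, $P : S \to \Delta(S)$ a kernel, $\mu_0$ a pmf on $S$, and define $\mu^t = \mu_0 P^t$ by iterated pushforward. For two sequences of kernels: a fixed kernel $P$ versus a perturbed kernel $P_m$ with per-state TV error at most $\epsilon_m$, the discounted occupancy measures $\rho = (1-\gamma)\sum_{t\ge 0}\gamma^t \mu^t$ and $\rho_m = (1-\gamma)\sum_{t \ge 0}\gamma^t \mu_m^t$ satisfy $D_{TV}(\rho, \rho_m) \le \frac{\gamma\epsilon_m}{1-\gamma}$. -/

import Mathlib

/-- Total variation bound between discounted occupancy measures of the true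
and perturbed kernels. -/
theorem occupancy_measure_tv_bound
    {S : Type*} [Fintype S]
    (P Pm : S → S → ℝ)      -- `P s' s` is the probability of `s` given `s'`
    (hP_nonneg : ∀ s' s, 0 ≤ P s' s) (hPm_nonneg : ∀ s' s, 0 ≤ Pm s' s)
    (hP_sum : ∀ s', ∑ s, P s' s = 1) (hPm_sum : ∀ s', ∑ s, Pm s' s = 1)
    (εm : ℝ)
    (hkernel : ∀ s', (1 / 2) * ∑ s, |Pm s' s - P s' s| ≤ εm)
    (μ0 : S → ℝ) (hμ0_nonneg : ∀ s, 0 ≤ μ0 s) (hμ0_sum : ∑ s, μ0 s = 1)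
    (μ μm : ℕ → S → ℝ)
    (hμ_init : μ 0 = μ0) (hμm_init : μm 0 = μ0)
    (hμ_rec : ∀ t s, μ (t + 1) s = ∑ s', P s' s * μ t s')
    (hμm_rec : ∀ t s, μm (t + 1) s = ∑ s', Pm s' s * μm t s')
    (γ : ℝ) (hγ0 : 0 ≤ γ) (hγ1 : γ < 1)
    (ρ ρm : S → ℝ)
    (hρ : ∀ s, ρ s = (1 - γ) * ∑' t : ℕ, γ ^ t * μ t s)
    (hρm : ∀ s, ρm s = (1 - γ) * ∑' t : ℕ, γ ^ t * μm t s) :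
    (1 / 2) * ∑ s, |ρ s - ρm s| ≤ γ * εm / (1 - γ) := by
  have hne : Nonempty S := by
    rcases isEmpty_or_nonempty S with h | h
    · simp at hμ0_sum
    · exact h
  obtain ⟨s0⟩ := hne
  have hεm : 0 ≤ εm := le_trans (by positivity) (hkernel s0)
  -- μ t and μm t are pmfs
  have hμ_pmf : ∀ t, (∀ s, 0 ≤ μ t s) ∧ (∑ s, μ t s = 1) := by
    intro t
    induction t with
    | zero => exact ⟨fun s => hμ_init ▸ hμ0_nonneg s, hμ_init ▸ hμ0_sum⟩
    | succ t ih =>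
      constructor
      · intro s
        rw [hμ_rec]
        exact Finset.sum_nonneg fun s' _ => mul_nonneg (hP_nonneg _ _) (ih.1 s')
      · simp only [hμ_rec]
        rw [Finset.sum_comm]
        calc ∑ s', ∑ s, P s' s * μ t s' = ∑ s', μ t s' := by
              refine Finset.sum_congr rfl fun s' _ => ?_
              rw [← Finset.sum_mul, hP_sum, one_mul]
          _ = 1 := ih.2
  have hμm_pmf : ∀ t, (∀ s, 0 ≤ μm t s) ∧ (∑ s, μm t s = 1) := by
    intro t
    induction t with
    | zero => exact ⟨fun s => hμm_init ▸ hμ0_nonneg s, hμm_init ▸ hμ0_sum⟩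
    | succ t ih =>
      constructor
      · intro s
        rw [hμm_rec]
        exact Finset.sum_nonneg fun s' _ => mul_nonneg (hPm_nonneg _ _) (ih.1 s')
      · simp only [hμm_rec]
        rw [Finset.sum_comm]
        calc ∑ s', ∑ s, Pm s' s * μm t s' = ∑ s', μm t s' := by
              refine Finset.sum_congr rfl fun s' _ => ?_
              rw [← Finset.sum_mul, hPm_sum, one_mul]
          _ = 1 := ih.2
  have hμ_le_one : ∀ t s, μ t s ≤ 1 := fun t s => by
    calc μ t s ≤ ∑ s', μ t s' :=
          Finset.single_le_sum (fun s' _ => (hμ_pmf t).1 s') (Finset.mem_univ s)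
      _ = 1 := (hμ_pmf t).2
  have hμm_le_one : ∀ t s, μm t s ≤ 1 := fun t s => by
    calc μm t s ≤ ∑ s', μm t s' :=
          Finset.single_le_sum (fun s' _ => (hμm_pmf t).1 s') (Finset.mem_univ s)
      _ = 1 := (hμm_pmf t).2
  -- compounding error bound
  have hd : ∀ t, ∑ s, |μ t s - μm t s| ≤ 2 * t * εm := by
    intro t
    induction t with
    | zero => simp [hμ_init, hμm_init]
    | succ t ih =>
      have key : ∀ s, |μ (t+1) s - μm (t+1) s| ≤
          ∑ s', P s' s * |μ t s' - μm t s'| + ∑ s', |P s' s - Pm s' s| * μm t s' := by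
        intro s
        rw [hμ_rec, hμm_rec]
        calc |∑ s', P s' s * μ t s' - ∑ s', Pm s' s * μm t s'|
            = |∑ s', (P s' s * (μ t s' - μm t s') + (P s' s - Pm s' s) * μm t s')| := by
              rw [← Finset.sum_sub_distrib]
              congr 1
              refine Finset.sum_congr rfl fun s' _ => by ring
          _ ≤ ∑ s', |P s' s * (μ t s' - μm t s') + (P s' s - Pm s' s) * μm t s'| :=
              Finset.abs_sum_le_sum_abs _ _
          _ ≤ ∑ s', (P s' s * |μ t s' - μm t s'| + |P s' s - Pm s' s| * μm t s') := by
              refine Finset.sum_le_sum fun s' _ => ?_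
              calc |P s' s * (μ t s' - μm t s') + (P s' s - Pm s' s) * μm t s'|
                  ≤ |P s' s * (μ t s' - μm t s')| + |(P s' s - Pm s' s) * μm t s'| :=
                    abs_add_le _ _
                _ = P s' s * |μ t s' - μm t s'| + |P s' s - Pm s' s| * μm t s' := by
                    rw [abs_mul, abs_mul, abs_of_nonneg (hP_nonneg s' s),
                      abs_of_nonneg ((hμm_pmf t).1 s')]
          _ = _ := Finset.sum_add_distrib
      calc ∑ s, |μ (t+1) s - μm (t+1) s|
          ≤ ∑ s, (∑ s', P s' s * |μ t s' - μm t s'| +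
              ∑ s', |P s' s - Pm s' s| * μm t s') :=
            Finset.sum_le_sum fun s _ => key s
        _ = (∑ s, ∑ s', P s' s * |μ t s' - μm t s'|) +
              ∑ s, ∑ s', |P s' s - Pm s' s| * μm t s' := Finset.sum_add_distrib
        _ = (∑ s', (∑ s, P s' s) * |μ t s' - μm t s'|) +
              ∑ s', (∑ s, |P s' s - Pm s' s|) * μm t s' := by
            have h1 : ∀ (A : S → S → ℝ) (f : S → ℝ),
                ∑ s, ∑ s', A s' s * f s' = ∑ s', (∑ s, A s' s) * f s' := by
              intro A f
              rw [Finset.sum_comm]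
              exact Finset.sum_congr rfl fun s' _ => (Finset.sum_mul _ _ _).symm
            rw [h1 P, h1 (fun s' s => |P s' s - Pm s' s|)]
        _ ≤ (∑ s', |μ t s' - μm t s'|) + ∑ s', (2 * εm) * μm t s' := by
            refine add_le_add (Finset.sum_le_sum fun s' _ => ?_)
              (Finset.sum_le_sum fun s' _ => ?_)
            · exact le_of_eq (by rw [hP_sum, one_mul])
            · refine mul_le_mul_of_nonneg_right ?_ ((hμm_pmf t).1 s')
              have h := hkernel s'
              have heq : ∑ s, |P s' s - Pm s' s| = ∑ s, |Pm s' s - P s' s| :=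
                Finset.sum_congr rfl fun s _ => abs_sub_comm _ _
              linarith
        _ = (∑ s', |μ t s' - μm t s'|) + 2 * εm := by
            rw [← Finset.mul_sum, (hμm_pmf t).2, mul_one]
        _ ≤ 2 * t * εm + 2 * εm := by linarith
        _ = 2 * (t + 1 : ℕ) * εm := by push_cast; ring
  -- summability facts
  have hgeom : Summable fun t : ℕ => γ ^ t := summable_geometric_of_lt_one hγ0 hγ1
  have hsμ : ∀ s, Summable fun t : ℕ => γ ^ t * μ t s := fun s =>
    Summable.of_nonneg_of_le
      (fun t => mul_nonneg (pow_nonneg hγ0 t) ((hμ_pmf t).1 s))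
      (fun t => by
        calc γ ^ t * μ t s ≤ γ ^ t * 1 :=
            mul_le_mul_of_nonneg_left (hμ_le_one t s) (pow_nonneg hγ0 t)
          _ = γ ^ t := mul_one _) hgeom
  have hsμm : ∀ s, Summable fun t : ℕ => γ ^ t * μm t s := fun s =>
    Summable.of_nonneg_of_le
      (fun t => mul_nonneg (pow_nonneg hγ0 t) ((hμm_pmf t).1 s))
      (fun t => by
        calc γ ^ t * μm t s ≤ γ ^ t * 1 :=
            mul_le_mul_of_nonneg_left (hμm_le_one t s) (pow_nonneg hγ0 t)
          _ = γ ^ t := mul_one _) hgeom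
  have habs : ∀ s, Summable fun t : ℕ => γ ^ t * |μ t s - μm t s| := fun s =>
    Summable.of_nonneg_of_le
      (fun t => mul_nonneg (pow_nonneg hγ0 t) (abs_nonneg _))
      (fun t => by
        have : |μ t s - μm t s| ≤ 2 := by
          have h1 := (hμ_pmf t).1 s; have h2 := (hμm_pmf t).1 s
          have h3 := hμ_le_one t s; have h4 := hμm_le_one t s
          rw [abs_sub_le_iff]; constructor <;> linarith
        calc γ ^ t * |μ t s - μm t s| ≤ γ ^ t * 2 :=
            mul_le_mul_of_nonneg_left this (pow_nonneg hγ0 t)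
          _ = 2 * γ ^ t := by ring)
      (hgeom.mul_left 2)
  have hγpos : 0 < 1 - γ := by linarith
  -- pointwise bound on |ρ s - ρm s|
  have hpt : ∀ s, |ρ s - ρm s| ≤ (1 - γ) * ∑' t : ℕ, γ ^ t * |μ t s - μm t s| := by
    intro s
    rw [hρ, hρm, ← mul_sub, abs_mul, abs_of_nonneg hγpos.le]
    refine mul_le_mul_of_nonneg_left ?_ hγpos.le
    rw [← Summable.tsum_sub (hsμ s) (hsμm s)]
    calc |∑' t : ℕ, (γ ^ t * μ t s - γ ^ t * μm t s)|
        ≤ ∑' t : ℕ, |γ ^ t * μ t s - γ ^ t * μm t s| := by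
          have hs : Summable fun t : ℕ => ‖γ ^ t * μ t s - γ ^ t * μm t s‖ := by
            simpa [Real.norm_eq_abs, abs_mul, abs_pow, abs_of_nonneg hγ0,
              ← mul_sub] using habs s
          simpa [Real.norm_eq_abs] using norm_tsum_le_tsum_norm hs
      _ = ∑' t : ℕ, γ ^ t * |μ t s - μm t s| := by
          refine tsum_congr fun t => ?_
          rw [← mul_sub, abs_mul, abs_of_nonneg (pow_nonneg hγ0 t)]
  -- sum over states, swap sum and tsum
  have hswap : ∑ s, ∑' t : ℕ, γ ^ t * |μ t s - μm t s|
      = ∑' t : ℕ, ∑ s, γ ^ t * |μ t s - μm t s| :=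
    (Summable.tsum_finsetSum fun s _ => habs s).symm
  have hsum_d : Summable fun t : ℕ => γ ^ t * ∑ s, |μ t s - μm t s| := by
    refine Summable.of_nonneg_of_le
      (fun t => mul_nonneg (pow_nonneg hγ0 t)
        (Finset.sum_nonneg fun s _ => abs_nonneg _))
      (fun t => ?_) (hgeom.mul_left (2 * (Fintype.card S : ℝ)))
    have : ∑ s, |μ t s - μm t s| ≤ 2 * Fintype.card S := by
      calc ∑ s, |μ t s - μm t s| ≤ ∑ _s : S, (2 : ℝ) := by
            refine Finset.sum_le_sum fun s _ => ?_
            have h1 := (hμ_pmf t).1 s; have h2 := (hμm_pmf t).1 s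
            have h3 := hμ_le_one t s; have h4 := hμm_le_one t s
            rw [abs_sub_le_iff]; constructor <;> linarith
        _ = 2 * Fintype.card S := by simp [mul_comm]
    calc γ ^ t * ∑ s, |μ t s - μm t s| ≤ γ ^ t * (2 * Fintype.card S) :=
        mul_le_mul_of_nonneg_left this (pow_nonneg hγ0 t)
      _ = 2 * Fintype.card S * γ ^ t := by ring
  have hsum_t : Summable fun t : ℕ => (t : ℝ) * γ ^ t := by
    have := summable_pow_mul_geometric_of_norm_lt_one 1 (r := γ)
      (by rwa [Real.norm_eq_abs, abs_of_nonneg hγ0])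
    simpa using this
  have htsum_t : ∑' t : ℕ, (t : ℝ) * γ ^ t = γ / (1 - γ) ^ 2 :=
    tsum_coe_mul_geometric_of_norm_lt_one
      (by rwa [Real.norm_eq_abs, abs_of_nonneg hγ0])
  -- main chain
  have main : ∑ s, |ρ s - ρm s| ≤ (1 - γ) * (2 * εm * (γ / (1 - γ) ^ 2)) := by
    calc ∑ s, |ρ s - ρm s|
        ≤ ∑ s, (1 - γ) * ∑' t : ℕ, γ ^ t * |μ t s - μm t s| :=
          Finset.sum_le_sum fun s _ => hpt s
      _ = (1 - γ) * ∑ s, ∑' t : ℕ, γ ^ t * |μ t s - μm t s| := by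
          rw [Finset.mul_sum]
      _ = (1 - γ) * ∑' t : ℕ, γ ^ t * ∑ s, |μ t s - μm t s| := by
          rw [hswap]
          congr 1
          exact tsum_congr fun t => by rw [Finset.mul_sum]
      _ ≤ (1 - γ) * ∑' t : ℕ, (2 * εm) * ((t : ℝ) * γ ^ t) := by
          refine mul_le_mul_of_nonneg_left ?_ hγpos.le
          refine Summable.tsum_le_tsum (fun t => ?_) hsum_d (hsum_t.mul_left (2 * εm))
          calc γ ^ t * ∑ s, |μ t s - μm t s| ≤ γ ^ t * (2 * t * εm) :=
              mul_le_mul_of_nonneg_left (hd t) (pow_nonneg hγ0 t)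
            _ = (2 * εm) * ((t : ℝ) * γ ^ t) := by ring
      _ = (1 - γ) * (2 * εm * (γ / (1 - γ) ^ 2)) := by
          rw [tsum_mul_left, htsum_t]
  have hne' : (1 - γ) ≠ 0 := ne_of_gt hγpos
  calc (1 / 2) * ∑ s, |ρ s - ρm s|
      ≤ (1 / 2) * ((1 - γ) * (2 * εm * (γ / (1 - γ) ^ 2))) := by linarith
    _ = γ * εm / (1 - γ) := by field_simp
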